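/- Under the nonlinear fixed-point iteration setup, there exist constants K₃ > 0 and K₃′ > 0 depending only on a and L (independent of n, k, and x₀) such that for all n ≥ 0 and k ≥ 1, the N×k matrices Ǔ with columns ǔ_{n+j} = u_{n+j} − F̃ʲ(F̃ − I)ε_n and W̌ with columns w̌_{n+j} = w_{n+j} − F̃ʲ(F̃ − I)²ε_n, j = 0,…,k−1, satisfy ‖Ǔ‖ ≤ K₃‖ε_n‖² and ‖W̌‖ ≤ K₃′‖ε_n‖². -/

import Mathlib

open scoped Matrix Matrix.Norms.L2Operator

private lemma euclid_coord_le_norm {N : ℕ} (v : EuclideanSpace ℂ (Fin N)) (j : Fin N) :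
    ‖v j‖ ≤ ‖v‖ := by
  rw [EuclideanSpace.norm_eq]
  have h : ‖v j‖ ^ 2 ≤ ∑ i, ‖v i‖ ^ 2 :=
    Finset.single_le_sum (f := fun i => ‖v i‖ ^ 2) (fun i _ => sq_nonneg _) (Finset.mem_univ j)
  calc ‖v j‖ = Real.sqrt (‖v j‖ ^ 2) := (Real.sqrt_sq (norm_nonneg _)).symm
    _ ≤ _ := Real.sqrt_le_sqrt h

private lemma opNorm_le_sum_cols {N k : ℕ} (c : Fin k → EuclideanSpace ℂ (Fin N)) :
    ‖(Matrix.of fun (p : Fin N) (j : Fin k) => c j p : Matrix (Fin N) (Fin k) ℂ)‖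
      ≤ ∑ j, ‖c j‖ := by
  rw [Matrix.l2_opNorm_def]
  refine ContinuousLinearMap.opNorm_le_bound _
    (Finset.sum_nonneg fun _ _ => norm_nonneg _) fun v => ?_
  have key : (LinearEquiv.trans Matrix.toEuclideanLin LinearMap.toContinuousLinearMap
      (Matrix.of fun (p : Fin N) (j : Fin k) => c j p)) v = ∑ j, v j • c j := by
    apply PiLp.ext
    intro p
    have hs : (∑ j, v j • c j) p = ∑ j, v j * c j p := by
      rw [show (∑ j, v j • c j) p = ∑ j, (v j • c j) p by rw [WithLp.ofLp_sum, Finset.sum_apply]]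
      simp [PiLp.smul_apply, smul_eq_mul]
    rw [hs]
    simp [LinearEquiv.trans_apply, LinearMap.coe_toContinuousLinearMap',
      Matrix.toEuclideanLin_apply, Matrix.mulVec, dotProduct,
      mul_comm]
  rw [key]
  calc ‖∑ j, v j • c j‖ ≤ ∑ j, ‖v j • c j‖ := norm_sum_le _ _
    _ = ∑ j, ‖v j‖ * ‖c j‖ := by simp [norm_smul]
    _ ≤ ∑ j, ‖c j‖ * ‖v‖ := Finset.sum_le_sum fun j _ => by
        rw [mul_comm]
        exact mul_le_mul_of_nonneg_left (euclid_coord_le_norm v j) (norm_nonneg _)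
    _ = (∑ j, ‖c j‖) * ‖v‖ := (Finset.sum_mul _ _ _).symm

set_option maxHeartbeats 1000000 in
/-- Under the nonlinear fixed-point iteration setup, there are constants
`K₃, K₃′ > 0` depending only on `a` and `L` such that for all `n ≥ 0` and `k ≥ 1`
the `N×k` matrices `Ǔ` (columns `ǔ_{n+j} = u_{n+j} − F̃ʲ(F̃−I)ε_n`) and `W̌`
(columns `w̌_{n+j} = w_{n+j} − F̃ʲ(F̃−I)²ε_n`) satisfy `‖Ǔ‖ ≤ K₃‖ε_n‖²` and
`‖W̌‖ ≤ K₃′‖ε_n‖²`. -/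
theorem rre_correction_matrix_norm_bound (L a : ℝ) (hL0 : 0 < L) (hL1 : L < 1) (ha : 0 < a) :
    ∃ K₃ K₃' : ℝ, 0 < K₃ ∧ 0 < K₃' ∧
      ∀ (N : ℕ), 1 ≤ N → ∀ (s : EuclideanSpace ℂ (Fin N)) (δ : ℝ), 0 < δ →
      ∀ (f : EuclideanSpace ℂ (Fin N) → EuclideanSpace ℂ (Fin N)), f s = s →
      (∀ x y : EuclideanSpace ℂ (Fin N),
        ‖x - s‖ ≤ δ → ‖y - s‖ ≤ δ → ‖f x - f y‖ ≤ L * ‖x - y‖) →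
      ∀ (F : EuclideanSpace ℂ (Fin N) →L[ℂ] EuclideanSpace ℂ (Fin N)), ‖F‖ ≤ L →
      (∀ x : EuclideanSpace ℂ (Fin N),
        ‖x - s‖ ≤ δ → ‖f x - s - F (x - s)‖ ≤ a * ‖x - s‖ ^ 2) →
      ∀ (x : ℕ → EuclideanSpace ℂ (Fin N)), ‖x 0 - s‖ ≤ δ →
      (∀ m, x (m + 1) = f (x m)) →
      ∀ n k : ℕ, 1 ≤ k →
        ‖(Matrix.of fun (p : Fin N) (j : Fin k) =>
            ((x (n + (j : ℕ) + 1) - x (n + (j : ℕ)))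
              - (F ^ (j : ℕ) * (F - 1)) (x n - s)) p)‖ ≤ K₃ * ‖x n - s‖ ^ 2 ∧
        ‖(Matrix.of fun (p : Fin N) (j : Fin k) =>
            (((x (n + (j : ℕ) + 2) - x (n + (j : ℕ) + 1))
                - (x (n + (j : ℕ) + 1) - x (n + (j : ℕ))))
              - ((F ^ (j : ℕ) * (F - 1) ^ 2 : EuclideanSpace ℂ (Fin N) →L[ℂ] EuclideanSpace ℂ (Fin N))) (x n - s)) p)‖ ≤ K₃' * ‖x n - s‖ ^ 2 := by
  have h1L : 0 < 1 - L := by linarith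
  set C₂ : ℝ := a / ((1 - L) * L) with hC₂
  have hC₂pos : 0 < C₂ := div_pos ha (by positivity)
  refine ⟨(2 * C₂) / (1 - L), (4 * C₂) / (1 - L), by positivity, by positivity, ?_⟩
  intro N hN s δ hδ f hfs hLip F hFL hF2 x hx0 hiter n k hk
  -- all iterates stay in the ball
  have hsball : ‖s - s‖ ≤ δ := by simp [hδ.le]
  have hball : ∀ m, ‖x m - s‖ ≤ δ := by
    intro m
    induction m with
    | zero => exact hx0
    | succ m ih =>
      have h1 : ‖x (m + 1) - s‖ ≤ L * ‖x m - s‖ := by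
        rw [hiter m]
        calc ‖f (x m) - s‖ = ‖f (x m) - f s‖ := by rw [hfs]
          _ ≤ L * ‖x m - s‖ := hLip _ _ ih hsball
      nlinarith [norm_nonneg (x m - s)]
  have hstep1 : ∀ m, ‖x (m + 1) - s‖ ≤ L * ‖x m - s‖ := by
    intro m
    rw [hiter m]
    calc ‖f (x m) - s‖ = ‖f (x m) - f s‖ := by rw [hfs]
      _ ≤ L * ‖x m - s‖ := hLip _ _ (hball m) hsball
  have hgeom : ∀ i, ‖x (n + i) - s‖ ≤ L ^ i * ‖x n - s‖ := by
    intro i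
    induction i with
    | zero => simp
    | succ i ih =>
      calc ‖x (n + (i + 1)) - s‖ = ‖x ((n + i) + 1) - s‖ := by ring_nf
        _ ≤ L * ‖x (n + i) - s‖ := hstep1 _
        _ ≤ L * (L ^ i * ‖x n - s‖) := by
            exact mul_le_mul_of_nonneg_left ih hL0.le
        _ = L ^ (i + 1) * ‖x n - s‖ := by ring
  have hquad : ∀ m, ‖(x (m + 1) - s) - F (x m - s)‖ ≤ a * ‖x m - s‖ ^ 2 := by
    intro m
    rw [hiter m]
    exact hF2 (x m) (hball m)
  set en : ℝ := ‖x n - s‖ with hen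
  have hen0 : 0 ≤ en := norm_nonneg _
  -- the key quadratic accumulation bound
  have hD : ∀ j : ℕ, ‖(x (n + j) - s) - (F ^ j) (x n - s)‖
      ≤ C₂ * L ^ j * (1 - L ^ j) * en ^ 2 := by
    intro j
    induction j with
    | zero => simp
    | succ j ih =>
      have decomp : (x (n + (j + 1)) - s) - (F ^ (j + 1)) (x n - s)
          = ((x ((n + j) + 1) - s) - F (x (n + j) - s))
            + F ((x (n + j) - s) - (F ^ j) (x n - s)) := by
        have hpow : (F ^ (j + 1)) (x n - s) = F ((F ^ j) (x n - s)) := by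
          rw [pow_succ']
          rfl
        rw [show n + (j + 1) = (n + j) + 1 from rfl]
        simp only [hpow, map_sub]
        abel
      have h1 : ‖(x ((n + j) + 1) - s) - F (x (n + j) - s)‖ ≤ a * (L ^ j) ^ 2 * en ^ 2 := by
        calc ‖(x ((n + j) + 1) - s) - F (x (n + j) - s)‖
            ≤ a * ‖x (n + j) - s‖ ^ 2 := hquad _
          _ ≤ a * (L ^ j * en) ^ 2 :=
              mul_le_mul_of_nonneg_left
                (pow_le_pow_left₀ (norm_nonneg _) (hgeom j) 2) ha.le
          _ = a * (L ^ j) ^ 2 * en ^ 2 := by ring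
      have h2 : ‖F ((x (n + j) - s) - (F ^ j) (x n - s))‖
          ≤ L * (C₂ * L ^ j * (1 - L ^ j) * en ^ 2) := by
        calc ‖F ((x (n + j) - s) - (F ^ j) (x n - s))‖
            ≤ ‖F‖ * ‖(x (n + j) - s) - (F ^ j) (x n - s)‖ := F.le_opNorm _
          _ ≤ L * (C₂ * L ^ j * (1 - L ^ j) * en ^ 2) := by
              apply mul_le_mul hFL ih (norm_nonneg _) hL0.le
      have heq : a * (L ^ j) ^ 2 * en ^ 2 + L * (C₂ * L ^ j * (1 - L ^ j) * en ^ 2)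
          = C₂ * L ^ (j + 1) * (1 - L ^ (j + 1)) * en ^ 2 := by
        rw [hC₂, pow_succ]
        field_simp
        ring
      calc ‖(x (n + (j + 1)) - s) - (F ^ (j + 1)) (x n - s)‖
          = ‖((x ((n + j) + 1) - s) - F (x (n + j) - s))
              + F ((x (n + j) - s) - (F ^ j) (x n - s))‖ := by rw [decomp]
        _ ≤ ‖(x ((n + j) + 1) - s) - F (x (n + j) - s)‖
              + ‖F ((x (n + j) - s) - (F ^ j) (x n - s))‖ := norm_add_le _ _
        _ ≤ a * (L ^ j) ^ 2 * en ^ 2 + L * (C₂ * L ^ j * (1 - L ^ j) * en ^ 2) :=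
            add_le_add h1 h2
        _ = _ := heq
  have hD' : ∀ j : ℕ, ‖(x (n + j) - s) - (F ^ j) (x n - s)‖ ≤ C₂ * L ^ j * en ^ 2 := by
    intro j
    refine (hD j).trans ?_
    have hLj : 0 ≤ L ^ j := by positivity
    have hLj1 : 1 - L ^ j ≤ 1 := by linarith
    calc C₂ * L ^ j * (1 - L ^ j) * en ^ 2 = (C₂ * L ^ j * en ^ 2) * (1 - L ^ j) := by ring
      _ ≤ (C₂ * L ^ j * en ^ 2) * 1 :=
          mul_le_mul_of_nonneg_left hLj1
            (mul_nonneg (mul_nonneg hC₂pos.le hLj) (sq_nonneg en))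
      _ = C₂ * L ^ j * en ^ 2 := by ring
  -- column bound for Ǔ
  have hColU : ∀ j : ℕ, ‖(x (n + j + 1) - x (n + j)) - (F ^ j * (F - 1)) (x n - s)‖
      ≤ (2 * C₂) * L ^ j * en ^ 2 := by
    intro j
    have hop : (F ^ j * (F - 1)) (x n - s)
        = (F ^ (j + 1)) (x n - s) - (F ^ j) (x n - s) := by
      have : F ^ j * (F - 1) = F ^ (j + 1) - F ^ j := by
        rw [mul_sub, mul_one, pow_succ]
      rw [this, ContinuousLinearMap.sub_apply]
    have hdecomp : (x (n + j + 1) - x (n + j)) - (F ^ j * (F - 1)) (x n - s)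
        = ((x (n + (j + 1)) - s) - (F ^ (j + 1)) (x n - s))
          - ((x (n + j) - s) - (F ^ j) (x n - s)) := by
      rw [hop, show n + (j + 1) = n + j + 1 from rfl]
      abel
    calc ‖(x (n + j + 1) - x (n + j)) - (F ^ j * (F - 1)) (x n - s)‖
        ≤ ‖(x (n + (j + 1)) - s) - (F ^ (j + 1)) (x n - s)‖
          + ‖(x (n + j) - s) - (F ^ j) (x n - s)‖ := by
          rw [hdecomp]; exact norm_sub_le _ _
      _ ≤ C₂ * L ^ (j + 1) * en ^ 2 + C₂ * L ^ j * en ^ 2 := add_le_add (hD' (j + 1)) (hD' j)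
      _ ≤ (2 * C₂) * L ^ j * en ^ 2 := by
          have hLj : 0 ≤ L ^ j := by positivity
          have hLL : L ^ (j + 1) ≤ L ^ j := by
            rw [pow_succ]; nlinarith
          have : C₂ * L ^ (j + 1) * en ^ 2 ≤ C₂ * L ^ j * en ^ 2 :=
            mul_le_mul_of_nonneg_right
              (mul_le_mul_of_nonneg_left hLL hC₂pos.le) (sq_nonneg en)
          linarith
  -- column bound for W̌
  have hColW : ∀ j : ℕ, ‖((x (n + j + 2) - x (n + j + 1)) - (x (n + j + 1) - x (n + j)))
      - (F ^ j * (F - 1) ^ 2 : EuclideanSpace ℂ (Fin N) →L[ℂ] EuclideanSpace ℂ (Fin N)) (x n - s)‖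
      ≤ (4 * C₂) * L ^ j * en ^ 2 := by
    intro j
    have hop : (F ^ j * (F - 1) ^ 2 : EuclideanSpace ℂ (Fin N) →L[ℂ] EuclideanSpace ℂ (Fin N))
        = F ^ (j + 1) * (F - 1) - F ^ j * (F - 1) := by
      have h1 : F ^ j * (F - 1) = F ^ (j + 1) - F ^ j := by
        rw [mul_sub, mul_one, pow_succ]
      calc F ^ j * (F - 1) ^ 2 = (F ^ j * (F - 1)) * (F - 1) := by rw [sq, mul_assoc]
        _ = (F ^ (j + 1) - F ^ j) * (F - 1) := by rw [h1]
        _ = F ^ (j + 1) * (F - 1) - F ^ j * (F - 1) := sub_mul _ _ _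
    have hdecomp : ((x (n + j + 2) - x (n + j + 1)) - (x (n + j + 1) - x (n + j)))
        - (F ^ j * (F - 1) ^ 2 : EuclideanSpace ℂ (Fin N) →L[ℂ] EuclideanSpace ℂ (Fin N)) (x n - s)
        = ((x (n + (j + 1) + 1) - x (n + (j + 1))) - (F ^ (j + 1) * (F - 1)) (x n - s))
          - ((x (n + j + 1) - x (n + j)) - (F ^ j * (F - 1)) (x n - s)) := by
      rw [hop, ContinuousLinearMap.sub_apply,
        show n + (j + 1) + 1 = n + j + 2 from rfl, show n + (j + 1) = n + j + 1 from rfl]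
      abel
    calc ‖((x (n + j + 2) - x (n + j + 1)) - (x (n + j + 1) - x (n + j)))
          - (F ^ j * (F - 1) ^ 2 : EuclideanSpace ℂ (Fin N) →L[ℂ] EuclideanSpace ℂ (Fin N)) (x n - s)‖
        ≤ ‖(x (n + (j + 1) + 1) - x (n + (j + 1))) - (F ^ (j + 1) * (F - 1)) (x n - s)‖
          + ‖(x (n + j + 1) - x (n + j)) - (F ^ j * (F - 1)) (x n - s)‖ := by
          rw [hdecomp]; exact norm_sub_le _ _
      _ ≤ (2 * C₂) * L ^ (j + 1) * en ^ 2 + (2 * C₂) * L ^ j * en ^ 2 :=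
          add_le_add (hColU (j + 1)) (hColU j)
      _ ≤ (4 * C₂) * L ^ j * en ^ 2 := by
          have hLj : 0 ≤ L ^ j := by positivity
          have hLL : L ^ (j + 1) ≤ L ^ j := by
            rw [pow_succ]; nlinarith
          have : (2 * C₂) * L ^ (j + 1) * en ^ 2 ≤ (2 * C₂) * L ^ j * en ^ 2 :=
            mul_le_mul_of_nonneg_right
              (mul_le_mul_of_nonneg_left hLL (by linarith)) (sq_nonneg en)
          linarith
  -- summing the columns
  have hgeomsum : ∑ j ∈ Finset.range k, L ^ j ≤ 1 / (1 - L) := by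
    rw [geom_sum_eq (ne_of_lt hL1)]
    have h2 : (L ^ k - 1) / (L - 1) = (1 - L ^ k) / (1 - L) := by
      rw [div_eq_div_iff (by linarith) (by linarith)]; ring
    rw [h2, div_le_div_iff₀ h1L h1L]
    nlinarith [pow_nonneg hL0.le k]
  have hsum : ∀ (c : Fin k → EuclideanSpace ℂ (Fin N)) (C : ℝ), 0 ≤ C →
      (∀ j : Fin k, ‖c j‖ ≤ C * L ^ (j : ℕ) * en ^ 2) →
      ‖(Matrix.of fun (p : Fin N) (j : Fin k) => c j p : Matrix (Fin N) (Fin k) ℂ)‖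
        ≤ (C / (1 - L)) * en ^ 2 := by
    intro c C hC hc
    refine (opNorm_le_sum_cols c).trans ?_
    calc ∑ j, ‖c j‖ ≤ ∑ j : Fin k, C * L ^ (j : ℕ) * en ^ 2 := Finset.sum_le_sum fun j _ => hc j
      _ = (C * en ^ 2) * ∑ j ∈ Finset.range k, L ^ j := by
          rw [← Fin.sum_univ_eq_sum_range, Finset.mul_sum]
          exact Finset.sum_congr rfl fun j _ => by ring
      _ ≤ (C * en ^ 2) * (1 / (1 - L)) := by
          exact mul_le_mul_of_nonneg_left hgeomsum (by positivity)
      _ = (C / (1 - L)) * en ^ 2 := by ring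
  constructor
  · exact hsum (fun j : Fin k => (x (n + (j : ℕ) + 1) - x (n + (j : ℕ)))
        - (F ^ (j : ℕ) * (F - 1)) (x n - s)) (2 * C₂) (by positivity)
        fun j => hColU (j : ℕ)
  · exact hsum (fun j : Fin k => ((x (n + (j : ℕ) + 2) - x (n + (j : ℕ) + 1))
          - (x (n + (j : ℕ) + 1) - x (n + (j : ℕ))))
        - (F ^ (j : ℕ) * (F - 1) ^ 2 :
            EuclideanSpace ℂ (Fin N) →L[ℂ] EuclideanSpace ℂ (Fin N)) (x n - s)) (4 * C₂)
        (by positivity) fun j => hColW (j : ℕ)
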